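/- Let κ ∈ ℕⁿ with each κ_s ≥ 1, N = |κ|, and let A and B be defined as: A_{y,κ,s,r} = (−y_s)^{N−κ_s}/(∏_{d≠s}(y_d−y_s)^{κ_d})·h_{κ_s−r}((y_d/(y_d−y_s))_{d≠s}, each repeated κ_d times) and B_{y,κ,s,r} = (−1)^{N−κ_s}(∏_{d≠s}(y_d−y_s)^{−κ_d})·h_{κ_s−r}((1/(y_d−y_s))_{d≠s}, each repeated κ_d times). Then for every s and every m ≥ 0: Σ_{r=1}^{κ_s} binomial(m+r−1, r−1)·A_{y,κ,s,r} = Σ_{r=1}^{κ_s} binomial(m+N−1, r−1)·B_{y,κ,s,r}·y_s^{N−r}, as an identity in F(y₁,…,yₙ). -/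

import Mathlib

open Finset

/-- Complete homogeneous polynomial of degree `m` in variables `x j`, `j : ι`. -/
noncomputable def homog {ι : Type*} [Fintype ι] [DecidableEq ι] {R : Type*} [CommSemiring R]
    (m : ℕ) (x : ι → R) : R :=
  ∑ k ∈ Finset.univ.piAntidiag m, ∏ j, x j ^ k j

section Homog

variable {ι : Type*} [DecidableEq ι] {R : Type*} [CommSemiring R]

/-- Complete homogeneous polynomial over a finset of variables. -/
noncomputable def homogS (s : Finset ι) (m : ℕ) (x : ι → R) : R :=
  ∑ k ∈ s.piAntidiag m, ∏ j ∈ s, x j ^ k j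

lemma homog_eq_homogS {ι : Type*} [Fintype ι] [DecidableEq ι] (m : ℕ) (x : ι → R) :
    homog m x = homogS Finset.univ m x := rfl

@[simp] lemma homogS_zero (s : Finset ι) (x : ι → R) : homogS s 0 x = 1 := by
  simp [homogS]

@[simp] lemma homogS_empty_of_ne (m : ℕ) (hm : m ≠ 0) (x : ι → R) :
    homogS (∅ : Finset ι) m x = 0 := by
  simp [homogS, Finset.piAntidiag_empty_of_ne_zero hm]

lemma homogS_cons {i : ι} {s : Finset ι} (hi : i ∉ s) (m : ℕ) (x : ι → R) :
    homogS (cons i s hi) m x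
      = ∑ p ∈ Finset.HasAntidiagonal.antidiagonal m, x i ^ p.1 * homogS s p.2 x := by
  rw [homogS, Finset.piAntidiag_cons, Finset.sum_disjiUnion]
  refine Finset.sum_congr rfl fun p hp => ?_
  rw [Finset.sum_map, homogS, Finset.mul_sum]
  refine Finset.sum_congr rfl fun g hg => ?_
  rw [Finset.mem_piAntidiag] at hg
  have hgi : g i = 0 := by
    by_contra h
    exact hi (hg.2 i h)
  rw [Finset.prod_cons]
  simp only [Function.Embedding.coeFn_mk, addRightEmbedding_apply]
  congr 1
  · simp [hgi]
  · refine Finset.prod_congr rfl fun j hj => ?_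
    have : j ≠ i := fun h => hi (h ▸ hj)
    simp [this]

lemma homogS_smul (s : Finset ι) (m : ℕ) (c : R) (x : ι → R) :
    homogS s m (fun i => c * x i) = c ^ m * homogS s m x := by
  rw [homogS, homogS, Finset.mul_sum]
  refine Finset.sum_congr rfl fun k hk => ?_
  rw [Finset.mem_piAntidiag] at hk
  rw [← hk.1]
  simp only [mul_pow]
  rw [Finset.prod_mul_distrib, Finset.prod_pow_eq_pow_sum]

end Homog

section Choose

/-- hockey stick -/
lemma hockey (q n : ℕ) : ∑ j ∈ range (n + 1), (q + j).choose j = (q + n + 1).choose n := by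
  induction n with
  | zero => simp
  | succ n ih =>
    rw [Finset.sum_range_succ, ih,
      show q + (n + 1) + 1 = (q + n + 1) + 1 from by ring, Nat.choose_succ_succ']
    rfl

/-- Vandermonde-type convolution. -/
lemma vand (p q n : ℕ) :
    ∑ ij ∈ Finset.HasAntidiagonal.antidiagonal n, (p + ij.1).choose ij.1 * (q + ij.2).choose ij.2
      = (p + q + n + 1).choose n := by
  induction p generalizing n with
  | zero =>
    rw [Finset.Nat.sum_antidiagonal_eq_sum_range_succ_mk]
    simp only [zero_add, Nat.choose_self, one_mul]
    have hrefl := Finset.sum_range_reflect (fun k => (q + k).choose k) (n + 1)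
    simp only [Nat.add_sub_cancel] at hrefl
    exact hrefl.trans (by rw [hockey])
  | succ p ihp =>
    induction n with
    | zero => simp
    | succ n ihn =>
      have hsucc := Finset.Nat.sum_antidiagonal_succ (n := n)
        (f := fun ij => (p + ij.1).choose ij.1 * (q + ij.2).choose ij.2)
      rw [ihp (n + 1)] at hsucc
      simp only [Nat.choose_zero_right, add_zero, one_mul] at hsucc
      rw [Finset.Nat.sum_antidiagonal_succ]
      simp only [Nat.choose_zero_right, add_zero, one_mul]
      have split : ∑ ij ∈ Finset.HasAntidiagonal.antidiagonal n,
            (p + 1 + (ij.1 + 1)).choose (ij.1 + 1) * (q + ij.2).choose ij.2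
          = (∑ ij ∈ Finset.HasAntidiagonal.antidiagonal n,
              (p + 1 + ij.1).choose ij.1 * (q + ij.2).choose ij.2)
            + ∑ ij ∈ Finset.HasAntidiagonal.antidiagonal n,
                (p + (ij.1 + 1)).choose (ij.1 + 1) * (q + ij.2).choose ij.2 := by
        rw [← Finset.sum_add_distrib]
        refine Finset.sum_congr rfl fun ij _ => ?_
        rw [show p + 1 + (ij.1 + 1) = (p + 1 + ij.1) + 1 from by ring,
          Nat.choose_succ_succ', add_mul,
          show p + 1 + ij.1 = p + (ij.1 + 1) from by ring]
      rw [split, ihn]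
      have pas : (p + 1 + q + (n + 1) + 1).choose (n + 1)
          = (p + q + (n + 1) + 1).choose n + (p + q + (n + 1) + 1).choose (n + 1) := by
        rw [show p + 1 + q + (n + 1) + 1 = (p + q + (n + 1) + 1) + 1 from by ring,
          Nat.choose_succ_succ']
      rw [pas, show p + 1 + q + n + 1 = p + q + (n + 1) + 1 from by ring]
      omega

/-- variant allowing `q' - 1` truncated subtraction inside. -/
lemma vand' (q' b n : ℕ) :
    ∑ ij ∈ Finset.HasAntidiagonal.antidiagonal n, (b + ij.1).choose ij.1 * (q' + ij.2 - 1).choose ij.2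
      = (q' + b + n).choose n := by
  match q' with
  | 0 =>
    rw [Finset.Nat.sum_antidiagonal_eq_sum_range_succ_mk, Finset.sum_range_succ]
    have h0 : ∀ k ∈ range n, (b + k).choose k * (0 + (n - k) - 1).choose (n - k) = 0 := by
      intro k hk
      rw [Finset.mem_range] at hk
      have : (0 + (n - k) - 1).choose (n - k) = 0 := Nat.choose_eq_zero_of_lt (by omega)
      rw [this, mul_zero]
    rw [Finset.sum_eq_zero h0]
    simp [Nat.choose_symm_add]
  | q + 1 =>
    calc ∑ ij ∈ Finset.HasAntidiagonal.antidiagonal n, (b + ij.1).choose ij.1 * (q + 1 + ij.2 - 1).choose ij.2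
        = ∑ ij ∈ Finset.HasAntidiagonal.antidiagonal n, (b + ij.1).choose ij.1 * (q + ij.2).choose ij.2 := by
          refine Finset.sum_congr rfl fun ij _ =>
            by rw [show q + 1 + ij.2 - 1 = q + ij.2 from by omega]
      _ = (b + q + n + 1).choose n := vand b q n
      _ = (q + 1 + b + n).choose n := by rw [show q + 1 + b + n = b + q + n + 1 from by ring]

end Choose

lemma reindex4 {M : Type*} [AddCommMonoid M] (T : ℕ) (f : ℕ → ℕ → ℕ → ℕ → M) :
    ∑ p ∈ Finset.HasAntidiagonal.antidiagonal T, ∑ q ∈ Finset.HasAntidiagonal.antidiagonal p.1,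
        ∑ r ∈ Finset.HasAntidiagonal.antidiagonal p.2, f q.1 q.2 r.1 r.2
      = ∑ p ∈ Finset.HasAntidiagonal.antidiagonal T, ∑ q ∈ Finset.HasAntidiagonal.antidiagonal p.2,
          ∑ r ∈ Finset.HasAntidiagonal.antidiagonal p.1, f q.1 r.1 r.2 q.2 := by
  have lhs : ∑ p ∈ Finset.HasAntidiagonal.antidiagonal T, ∑ q ∈ Finset.HasAntidiagonal.antidiagonal p.1,
        ∑ r ∈ Finset.HasAntidiagonal.antidiagonal p.2, f q.1 q.2 r.1 r.2
      = ∑ z ∈ (Finset.HasAntidiagonal.antidiagonal T).sigma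
          (fun p => Finset.HasAntidiagonal.antidiagonal p.1 ×ˢ Finset.HasAntidiagonal.antidiagonal p.2),
          f z.2.1.1 z.2.1.2 z.2.2.1 z.2.2.2 := by
    rw [Finset.sum_sigma]
    exact Finset.sum_congr rfl fun p _ => by rw [Finset.sum_product]
  have rhs : ∑ p ∈ Finset.HasAntidiagonal.antidiagonal T, ∑ q ∈ Finset.HasAntidiagonal.antidiagonal p.2,
          ∑ r ∈ Finset.HasAntidiagonal.antidiagonal p.1, f q.1 r.1 r.2 q.2
      = ∑ z ∈ (Finset.HasAntidiagonal.antidiagonal T).sigma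
          (fun p => Finset.HasAntidiagonal.antidiagonal p.2 ×ˢ Finset.HasAntidiagonal.antidiagonal p.1),
          f z.2.1.1 z.2.2.1 z.2.2.2 z.2.1.2 := by
    rw [Finset.sum_sigma]
    exact Finset.sum_congr rfl fun p _ => by rw [Finset.sum_product]
  rw [lhs, rhs]
  refine Finset.sum_nbij'
    (fun z => ⟨(z.2.1.2 + z.2.2.1, z.2.1.1 + z.2.2.2), ((z.2.1.1, z.2.2.2), (z.2.1.2, z.2.2.1))⟩)
    (fun z => ⟨(z.2.1.1 + z.2.2.1, z.2.2.2 + z.2.1.2), ((z.2.1.1, z.2.2.1), (z.2.2.2, z.2.1.2))⟩)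
    ?_ ?_ ?_ ?_ ?_
  · rintro ⟨⟨a, u⟩, ⟨⟨b, e⟩, ⟨j, t⟩⟩⟩ hz
    simp only [Finset.mem_sigma, Finset.mem_product, Finset.HasAntidiagonal.mem_antidiagonal] at hz ⊢
    refine ⟨by omega, trivial, trivial⟩
  · rintro ⟨⟨J, w⟩, ⟨⟨b, t⟩, ⟨e, j⟩⟩⟩ hz
    simp only [Finset.mem_sigma, Finset.mem_product, Finset.HasAntidiagonal.mem_antidiagonal] at hz ⊢
    refine ⟨by omega, trivial, trivial⟩
  · rintro ⟨⟨a, u⟩, ⟨⟨b, e⟩, ⟨j, t⟩⟩⟩ hz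
    simp only [Finset.mem_sigma, Finset.mem_product, Finset.HasAntidiagonal.mem_antidiagonal] at hz
    obtain ⟨h1, h2, h3⟩ := hz
    subst h2; subst h3
    rfl
  · rintro ⟨⟨J, w⟩, ⟨⟨b, t⟩, ⟨e, j⟩⟩⟩ hz
    simp only [Finset.mem_sigma, Finset.mem_product, Finset.HasAntidiagonal.mem_antidiagonal] at hz
    obtain ⟨h1, h2, h3⟩ := hz
    subst h2; subst h3
    rfl
  · rintro ⟨⟨a, u⟩, ⟨⟨b, e⟩, ⟨j, t⟩⟩⟩ _
    rfl

section Shift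

variable {ι : Type*} [DecidableEq ι] {R : Type*} [CommSemiring R]

lemma shift (x : ι → R) (s : Finset ι) : ∀ T : ℕ,
    homogS s T (fun i => 1 + x i)
      = ∑ p ∈ Finset.HasAntidiagonal.antidiagonal T,
          ((s.card + T - 1).choose p.1 : R) * homogS s p.2 x := by
  induction s using Finset.cons_induction with
  | empty =>
    intro T
    match T with
    | 0 => simp
    | T + 1 =>
      rw [homogS_empty_of_ne _ (Nat.succ_ne_zero T), Finset.Nat.sum_antidiagonal_succ']
      rw [Finset.sum_eq_zero (fun p (_ : p ∈ Finset.HasAntidiagonal.antidiagonal T) => by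
        rw [homogS_empty_of_ne _ (Nat.succ_ne_zero p.2), mul_zero])]
      rw [homogS_zero]
      simp only [Finset.card_empty, zero_add, Nat.add_sub_cancel, mul_one, add_zero]
      rw [Nat.choose_eq_zero_of_lt (Nat.lt_succ_self T)]
      simp
  | cons i s hi ih =>
    intro T
    have expand : ∀ a : ℕ, (1 + x i) ^ a
        = ∑ q ∈ Finset.HasAntidiagonal.antidiagonal a, x i ^ q.1 * ((q.1 + q.2).choose q.1 : R) := by
      intro a
      rw [Finset.Nat.sum_antidiagonal_eq_sum_range_succ_mk, add_comm (1 : R), add_pow]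
      refine Finset.sum_congr rfl fun k hk => ?_
      rw [Finset.mem_range] at hk
      rw [one_pow, mul_one, show k + (a - k) = a from by omega]
    calc homogS (cons i s hi) T (fun i => 1 + x i)
        = ∑ p ∈ Finset.HasAntidiagonal.antidiagonal T, ∑ q ∈ Finset.HasAntidiagonal.antidiagonal p.1,
            ∑ r ∈ Finset.HasAntidiagonal.antidiagonal p.2,
              (x i ^ q.1 * ((q.1 + q.2).choose q.1 : R))
                * (((s.card + (r.1 + r.2) - 1).choose r.1 : R) * homogS s r.2 x) := by
          rw [homogS_cons hi]
          refine Finset.sum_congr rfl fun p hp => ?_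
          rw [expand p.1, ih p.2, Finset.sum_mul_sum]
          refine Finset.sum_congr rfl fun q hq => Finset.sum_congr rfl fun r hr => ?_
          rw [Finset.HasAntidiagonal.mem_antidiagonal] at hr
          rw [hr]
      _ = ∑ p ∈ Finset.HasAntidiagonal.antidiagonal T, ∑ q ∈ Finset.HasAntidiagonal.antidiagonal p.2,
            ∑ r ∈ Finset.HasAntidiagonal.antidiagonal p.1,
              (x i ^ q.1 * ((q.1 + r.1).choose q.1 : R))
                * (((s.card + (r.2 + q.2) - 1).choose r.2 : R) * homogS s q.2 x) :=
          reindex4 T (fun b e j t => (x i ^ b * ((b + e).choose b : R))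
            * (((s.card + (j + t) - 1).choose j : R) * homogS s t x))
      _ = ∑ p ∈ Finset.HasAntidiagonal.antidiagonal T, ∑ q ∈ Finset.HasAntidiagonal.antidiagonal p.2,
            ((s.card + T).choose p.1 : R) * (x i ^ q.1 * homogS s q.2 x) := by
          refine Finset.sum_congr rfl fun p hp => Finset.sum_congr rfl fun q hq => ?_
          rw [Finset.HasAntidiagonal.mem_antidiagonal] at hp hq
          calc ∑ r ∈ Finset.HasAntidiagonal.antidiagonal p.1,
                (x i ^ q.1 * ((q.1 + r.1).choose q.1 : R))
                  * (((s.card + (r.2 + q.2) - 1).choose r.2 : R) * homogS s q.2 x)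
              = (x i ^ q.1 * homogS s q.2 x) *
                  ∑ r ∈ Finset.HasAntidiagonal.antidiagonal p.1,
                    (((q.1 + r.1).choose r.1 * (s.card + q.2 + r.2 - 1).choose r.2 : ℕ) : R) := by
                rw [Finset.mul_sum]
                refine Finset.sum_congr rfl fun r hr => ?_
                rw [Nat.choose_symm_add,
                  show s.card + (r.2 + q.2) - 1 = s.card + q.2 + r.2 - 1 from by omega]
                push_cast
                ring
            _ = ((s.card + T).choose p.1 : R) * (x i ^ q.1 * homogS s q.2 x) := by
                rw [← Nat.cast_sum, vand' (s.card + q.2) q.1 p.1,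
                  show s.card + q.2 + q.1 + p.1 = s.card + T from by omega]
                ring
      _ = ∑ p ∈ Finset.HasAntidiagonal.antidiagonal T,
            (((cons i s hi).card + T - 1).choose p.1 : R) * homogS (cons i s hi) p.2 x := by
          refine Finset.sum_congr rfl fun p hp => ?_
          rw [homogS_cons hi, Finset.card_cons, Finset.mul_sum,
            show s.card + 1 + T - 1 = s.card + T from by omega]

end Shift

section Key

variable {ι : Type*} [DecidableEq ι] {R : Type*} [CommSemiring R]

lemma Tpascal (g : ℕ → R) (c k : ℕ) :
    ∑ p ∈ Finset.HasAntidiagonal.antidiagonal (k + 1), ((c + 1).choose p.1 : R) * g p.2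
      = (∑ p ∈ Finset.HasAntidiagonal.antidiagonal (k + 1), (c.choose p.1 : R) * g p.2)
        + ∑ p ∈ Finset.HasAntidiagonal.antidiagonal k, (c.choose p.1 : R) * g p.2 := by
  rw [Finset.Nat.sum_antidiagonal_succ (f := fun p => ((c + 1).choose p.1 : R) * g p.2),
    Finset.Nat.sum_antidiagonal_succ (f := fun p => (c.choose p.1 : R) * g p.2)]
  simp only [Nat.choose_zero_right, Nat.cast_one, one_mul]
  rw [add_assoc]
  congr 1
  rw [← Finset.sum_add_distrib]
  refine Finset.sum_congr rfl fun p hp => ?_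
  rw [Nat.choose_succ_succ' c p.1]
  push_cast
  ring

lemma Lpascal (g : ℕ → R) (m k : ℕ) :
    ∑ p ∈ Finset.HasAntidiagonal.antidiagonal (k + 1), ((m + 1 + p.1).choose p.1 : R) * g p.2
      = (∑ p ∈ Finset.HasAntidiagonal.antidiagonal (k + 1), ((m + p.1).choose p.1 : R) * g p.2)
        + ∑ p ∈ Finset.HasAntidiagonal.antidiagonal k, ((m + 1 + p.1).choose p.1 : R) * g p.2 := by
  rw [Finset.Nat.sum_antidiagonal_succ (f := fun p => ((m + 1 + p.1).choose p.1 : R) * g p.2),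
    Finset.Nat.sum_antidiagonal_succ (f := fun p => ((m + p.1).choose p.1 : R) * g p.2)]
  simp only [add_zero, Nat.choose_zero_right, Nat.cast_one, one_mul]
  rw [add_assoc]
  congr 1
  rw [← Finset.sum_add_distrib]
  refine Finset.sum_congr rfl fun p hp => ?_
  rw [show m + 1 + (p.1 + 1) = (m + (p.1 + 1)) + 1 from by ring,
    Nat.choose_succ_succ' (m + (p.1 + 1)) p.1,
    show m + 1 + p.1 = m + (p.1 + 1) from by ring]
  push_cast
  ring

lemma key (x : ι → R) (s : Finset ι) : ∀ m k : ℕ,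
    ∑ p ∈ Finset.HasAntidiagonal.antidiagonal k, ((m + p.1).choose p.1 : R) * homogS s p.2 (fun i => 1 + x i)
      = ∑ p ∈ Finset.HasAntidiagonal.antidiagonal k, ((m + k + s.card).choose p.1 : R) * homogS s p.2 x := by
  intro m
  induction m with
  | zero =>
    intro k
    induction k with
    | zero => simp
    | succ k ihk =>
      simp only [zero_add] at ihk ⊢
      have hL : ∑ p ∈ Finset.HasAntidiagonal.antidiagonal (k + 1),
            (p.1.choose p.1 : R) * homogS s p.2 (fun i => 1 + x i)
          = ∑ p ∈ Finset.HasAntidiagonal.antidiagonal (k + 1), homogS s p.2 (fun i => 1 + x i) := by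
        refine Finset.sum_congr rfl fun p _ => by rw [Nat.choose_self]; simp
      rw [hL, Finset.Nat.sum_antidiagonal_succ (f := fun p => homogS s p.2 (fun i => 1 + x i))]
      have hL2 : ∑ p ∈ Finset.HasAntidiagonal.antidiagonal k, homogS s p.2 (fun i => 1 + x i)
          = ∑ p ∈ Finset.HasAntidiagonal.antidiagonal k, (p.1.choose p.1 : R) * homogS s p.2 (fun i => 1 + x i) := by
        refine Finset.sum_congr rfl fun p _ => by rw [Nat.choose_self]; simp
      rw [hL2, ihk]
      have hsh := shift x s (k + 1)
      rw [show s.card + (k + 1) - 1 = k + s.card from by omega] at hsh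
      rw [hsh]
      have hT := Tpascal (fun t => homogS s t x) (k + s.card) k
      rw [show k + 1 + s.card = (k + s.card) + 1 from by ring, hT]
  | succ m ihm =>
    intro k
    induction k with
    | zero => simp
    | succ k ihk =>
      rw [Lpascal (fun t => homogS s t (fun i => 1 + x i)) m k]
      rw [ihk, ihm (k + 1)]
      have hT := Tpascal (fun t => homogS s t x) (m + (k + 1) + s.card) k
      rw [show m + 1 + (k + 1) + s.card = (m + (k + 1) + s.card) + 1 from by ring, hT,
        show m + 1 + k + s.card = m + (k + 1) + s.card from by ring]


end Key

lemma Icc_to_adg {K : Type*} [AddCommMonoid K] (k' : ℕ) (F : ℕ → K) :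
    ∑ r ∈ Finset.Icc 1 (k' + 1), F r = ∑ p ∈ Finset.HasAntidiagonal.antidiagonal k', F (p.1 + 1) := by
  refine Finset.sum_nbij' (fun r => (r - 1, k' + 1 - r)) (fun p => p.1 + 1) ?_ ?_ ?_ ?_ ?_
  · intro r hr
    rw [Finset.mem_Icc] at hr
    rw [Finset.HasAntidiagonal.mem_antidiagonal]
    dsimp only
    omega
  · intro p hp
    rw [Finset.HasAntidiagonal.mem_antidiagonal] at hp
    rw [Finset.mem_Icc]
    omega
  · intro r hr
    rw [Finset.mem_Icc] at hr
    dsimp only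
    omega
  · rintro ⟨p1, p2⟩ hp
    rw [Finset.HasAntidiagonal.mem_antidiagonal] at hp
    dsimp only at hp ⊢
    rw [Prod.mk.injEq]
    constructor <;> omega
  · intro r hr
    rw [Finset.mem_Icc] at hr
    dsimp only
    congr 1
    omega

/-- The coefficient `A_{y,κ,s,r}`. -/
noncomputable def Acoef {K : Type*} [Field K] {n : ℕ} (y : Fin n → K) (κ : Fin n → ℕ)
    (s : Fin n) (r : ℕ) : K :=
  (-(y s)) ^ ((∑ j, κ j) - κ s)
    / (∏ d ∈ Finset.univ.erase s, (y d - y s) ^ κ d)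
    * homog (κ s - r)
        (fun p : Σ d : {d : Fin n // d ≠ s}, Fin (κ d.1) => y p.1.1 / (y p.1.1 - y s))

/-- The coefficient `B_{y,κ,s,r}`. -/
noncomputable def Bcoef {K : Type*} [Field K] {n : ℕ} (y : Fin n → K) (κ : Fin n → ℕ)
    (s : Fin n) (r : ℕ) : K :=
  (-1 : K) ^ ((∑ j, κ j) - κ s)
    * (∏ d ∈ Finset.univ.erase s, (y d - y s) ^ κ d)⁻¹
    * homog (κ s - r)
        (fun p : Σ d : {d : Fin n // d ≠ s}, Fin (κ d.1) => (y p.1.1 - y s)⁻¹)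

theorem stmt_19 (K : Type*) [Field K] (n : ℕ) (y : Fin n → K) (hy : Function.Injective y)
    (κ : Fin n → ℕ) (hκ : ∀ j, 1 ≤ κ j) (s : Fin n) (m : ℕ) :
    ∑ r ∈ Finset.Icc 1 (κ s), ((m + r - 1).choose (r - 1) : K) * Acoef y κ s r
      = ∑ r ∈ Finset.Icc 1 (κ s),
          ((m + (∑ j, κ j) - 1).choose (r - 1) : K) * Bcoef y κ s r
            * y s ^ ((∑ j, κ j) - r) := by
  classical
  obtain ⟨k', hk'⟩ : ∃ k', κ s = k' + 1 := ⟨κ s - 1, by have := hκ s; omega⟩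
  simp only [Acoef, Bcoef]
  set N := ∑ j, κ j with hN
  set M := ∑ d ∈ Finset.univ.erase s, κ d with hM
  set P := ∏ d ∈ Finset.univ.erase s, (y d - y s) ^ κ d with hP
  have hMN : κ s + M = N := by
    rw [hM, hN]
    exact Finset.add_sum_erase _ κ (Finset.mem_univ s)
  have hcard : Fintype.card (Σ d : {d : Fin n // d ≠ s}, Fin (κ d.1)) = M := by
    rw [Fintype.card_sigma]
    simp only [Fintype.card_fin]
    rw [hM]
    exact (Finset.sum_subtype _ (fun x => by simp [Finset.mem_erase]) κ).symm
  have hx : (fun p : Σ d : {d : Fin n // d ≠ s}, Fin (κ d.1) => y p.1.1 / (y p.1.1 - y s))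
      = fun p => 1 + y s * (y p.1.1 - y s)⁻¹ := by
    funext p
    have hne : y p.1.1 - y s ≠ 0 := sub_ne_zero.2 fun h => p.1.2 (hy h)
    field_simp
    ring
  rw [hk', hx]
  rw [Icc_to_adg, Icc_to_adg]
  rw [hk'] at hMN
  have hL : ∑ p ∈ Finset.HasAntidiagonal.antidiagonal k',
        ((m + (p.1 + 1) - 1).choose (p.1 + 1 - 1) : K)
          * ((-(y s)) ^ (N - (k' + 1)) / P
            * homog ((k' + 1) - (p.1 + 1))
              (fun p : Σ d : {d : Fin n // d ≠ s}, Fin (κ d.1) => 1 + y s * (y p.1.1 - y s)⁻¹))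
      = (-(y s)) ^ (N - (k' + 1)) / P
          * ∑ p ∈ Finset.HasAntidiagonal.antidiagonal k',
              ((m + p.1).choose p.1 : K)
                * homogS Finset.univ p.2
                  (fun q : Σ d : {d : Fin n // d ≠ s}, Fin (κ d.1)
                    => 1 + y s * (y q.1.1 - y s)⁻¹) := by
    rw [Finset.mul_sum]
    refine Finset.sum_congr rfl fun p hp => ?_
    rw [Finset.HasAntidiagonal.mem_antidiagonal] at hp
    rw [homog_eq_homogS,
      show m + (p.1 + 1) - 1 = m + p.1 from by omega,
      show p.1 + 1 - 1 = p.1 from by omega,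
      show (k' + 1) - (p.1 + 1) = p.2 from by omega]
    ring
  rw [hL]
  have hkey := key (fun q : Σ d : {d : Fin n // d ≠ s}, Fin (κ d.1)
    => y s * (y q.1.1 - y s)⁻¹) Finset.univ m k'
  rw [Finset.card_univ, hcard] at hkey
  rw [hkey]
  rw [Finset.mul_sum]
  refine Finset.sum_congr rfl fun p hp => ?_
  rw [Finset.HasAntidiagonal.mem_antidiagonal] at hp
  rw [homogS_smul, homog_eq_homogS,
    show (k' + 1) - (p.1 + 1) = p.2 from by omega,
    show p.1 + 1 - 1 = p.1 from by omega,
    show m + k' + M = m + N - 1 from by omega,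
    neg_pow, div_eq_mul_inv,
    show N - (p.1 + 1) = (N - (k' + 1)) + p.2 from by omega,
    pow_add]
  ring
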